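/- Define the n-th Legendre polynomial P_n ∈ ℝ[X] by Rodrigues' formula P_n = (1/(2ⁿ n!)) · Dⁿ((X² − 1)ⁿ), where D denotes polynomial differentiation. Then for all j, k ≥ 0, ∫_{−1}^{1} P_k'(x) P_j(x) dx = 0 if k ≤ j, and ∫_{−1}^{1} P_k'(x) P_j(x) dx = 1 − (−1)^{k+j} if k > j. -/

import Mathlib

open Polynomial

/-- The `n`-th Legendre polynomial, defined by Rodrigues' formula. -/
noncomputable def legendre (n : ℕ) : Polynomial ℝ :=
  (1 / (2 ^ n * n.factorial) : ℝ) • (derivative^[n] ((X ^ 2 - 1) ^ n))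

private lemma sq_sub_one_pow (n : ℕ) :
    ((X : ℝ[X]) ^ 2 - 1) ^ n = (X - C 1) ^ n * (X - C (-1)) ^ n := by
  rw [← mul_pow]; congr 1; simp only [map_one, map_neg]; ring

/-- Integration by parts for polynomials on [-1,1]. -/
private lemma poly_ibp (p q : ℝ[X]) :
    ∫ x in (-1 : ℝ)..1, (derivative p).eval x * q.eval x
      = p.eval 1 * q.eval 1 - p.eval (-1) * q.eval (-1)
        - ∫ x in (-1 : ℝ)..1, p.eval x * (derivative q).eval x := by
  have h := intervalIntegral.integral_deriv_mul_eq_sub_of_hasDerivAt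
      (a := (-1 : ℝ)) (b := 1)
      (u := fun x => p.eval x) (v := fun x => q.eval x)
      (u' := fun x => (derivative p).eval x) (v' := fun x => (derivative q).eval x)
      (p.continuous.continuousOn) (q.continuous.continuousOn)
      (fun x _ => p.hasDerivAt x) (fun x _ => q.hasDerivAt x)
      ((p.derivative.continuous).intervalIntegrable _ _)
      ((q.derivative.continuous).intervalIntegrable _ _)
  beta_reduce at h
  rw [intervalIntegral.integral_add
      (f := fun x => (derivative p).eval x * q.eval x)
      (g := fun x => p.eval x * (derivative q).eval x)
      (((derivative p).continuous.mul q.continuous).intervalIntegrable _ _)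
      ((p.continuous.mul (derivative q).continuous).intervalIntegrable _ _)] at h
  linarith [h]

/-- The iterated derivatives of `(X^2-1)^n` of order `< n` vanish at `±1`. -/
private lemma iterate_deriv_eval_eq_zero {m n : ℕ} (hm : m < n) :
    (derivative^[m] (((X : ℝ[X]) ^ 2 - 1) ^ n)).eval 1 = 0 ∧
    (derivative^[m] (((X : ℝ[X]) ^ 2 - 1) ^ n)).eval (-1) = 0 := by
  rw [sq_sub_one_pow, Polynomial.iterate_derivative_mul]
  constructor <;>
  · rw [eval_finset_sum]
    refine Finset.sum_eq_zero fun i hi => ?_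
    rw [Finset.mem_range] at hi
    rw [iterate_derivative_X_sub_pow, iterate_derivative_X_sub_pow]
    have h1 : 1 ≤ n - (m - i) := by omega
    have h2 : 1 ≤ n - i := by omega
    simp only [eval_smul, smul_eq_mul, eval_mul, eval_pow, eval_sub, eval_X, eval_C]
    first
    | rw [show (1 : ℝ) - 1 = 0 by ring, zero_pow (by omega)]
    | rw [show (-1 : ℝ) - (-1) = 0 by ring, zero_pow (by omega)]
    ring

private lemma legendre_eval_one (n : ℕ) : (legendre n).eval 1 = 1 := by
  rw [legendre, eval_smul, sq_sub_one_pow, Polynomial.iterate_derivative_mul, eval_finset_sum]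
  rw [Finset.sum_eq_single 0]
  · simp only [Nat.choose_zero_right, one_smul, Nat.sub_zero, Function.iterate_zero, id_eq,
      eval_mul, iterate_derivative_X_sub_pow_self]
    simp only [eval_natCast, eval_pow, eval_sub, eval_X, eval_C, smul_eq_mul]
    rw [show (1 : ℝ) - (-1) = 2 by ring]
    have h2 : (2 : ℝ) ^ n ≠ 0 := by positivity
    have hf : (n.factorial : ℝ) ≠ 0 := by exact_mod_cast n.factorial_ne_zero
    field_simp
  · intro i hi hne
    rw [iterate_derivative_X_sub_pow]
    simp only [eval_smul, smul_eq_mul, eval_mul, eval_pow, eval_sub, eval_X, eval_C]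
    rw [Finset.mem_range] at hi
    rw [show (1 : ℝ) - 1 = 0 by ring, zero_pow (by omega)]
    ring
  · intro h
    exact absurd (Finset.mem_range.mpr n.succ_pos) h

private lemma legendre_eval_neg_one (n : ℕ) : (legendre n).eval (-1) = (-1) ^ n := by
  rw [legendre, eval_smul, sq_sub_one_pow, Polynomial.iterate_derivative_mul, eval_finset_sum]
  rw [Finset.sum_eq_single n]
  · simp only [Nat.choose_self, one_smul, Nat.sub_self, Function.iterate_zero, id_eq,
      eval_mul, iterate_derivative_X_sub_pow_self]
    simp only [eval_natCast, eval_pow, eval_sub, eval_X, eval_C, smul_eq_mul]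
    rw [show (-1 : ℝ) - 1 = -2 by ring]
    have h2 : (2 : ℝ) ^ n ≠ 0 := by positivity
    have hf : (n.factorial : ℝ) ≠ 0 := by exact_mod_cast n.factorial_ne_zero
    rw [show ((-2 : ℝ)) ^ n = (-1) ^ n * 2 ^ n by rw [← neg_one_mul, mul_pow]]
    field_simp
  · intro i hi hne
    rw [Finset.mem_range] at hi
    rw [iterate_derivative_X_sub_pow (c := (-1 : ℝ))]
    simp only [eval_smul, smul_eq_mul, eval_mul, eval_pow, eval_sub, eval_X, eval_C]
    rw [show (-1 : ℝ) - (-1) = 0 by ring, zero_pow (by omega)]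
    ring
  · intro h
    exact absurd (Finset.mem_range.mpr n.lt_succ_self) h

/-- Repeated integration by parts. -/
private lemma shift_deriv (n : ℕ) (q : ℝ[X]) :
    ∀ m ≤ n, ∫ x in (-1 : ℝ)..1,
        (derivative^[n] (((X : ℝ[X]) ^ 2 - 1) ^ n)).eval x * q.eval x
      = (-1 : ℝ) ^ m * ∫ x in (-1 : ℝ)..1,
          (derivative^[n - m] (((X : ℝ[X]) ^ 2 - 1) ^ n)).eval x
            * (derivative^[m] q).eval x := by
  intro m
  induction m with
  | zero => intro _; simp
  | succ m ih =>
    intro hm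
    have hm' : m ≤ n := by omega
    rw [ih hm']
    have hstep : derivative^[n - m] (((X : ℝ[X]) ^ 2 - 1) ^ n)
        = derivative (derivative^[n - (m + 1)] (((X : ℝ[X]) ^ 2 - 1) ^ n)) := by
      rw [show n - m = (n - (m + 1)) + 1 by omega, Function.iterate_succ_apply']
    rw [hstep, poly_ibp]
    obtain ⟨h1, h2⟩ := iterate_deriv_eval_eq_zero (show n - (m + 1) < n by omega)
    rw [h1, h2, ← Function.iterate_succ_apply' derivative m q]
    ring

/-- Orthogonality: `legendre n` is orthogonal to polynomials of degree `< n`. -/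
private lemma legendre_orth {n : ℕ} {q : ℝ[X]} (hq : q.natDegree < n) :
    ∫ x in (-1 : ℝ)..1, (legendre n).eval x * q.eval x = 0 := by
  have h := shift_deriv n q n le_rfl
  rw [Nat.sub_self, Function.iterate_zero, id_eq,
      Polynomial.iterate_derivative_eq_zero hq] at h
  simp only [eval_zero, mul_zero, intervalIntegral.integral_zero] at h
  simp only [legendre, eval_smul, smul_eq_mul, mul_assoc]
  rw [intervalIntegral.integral_const_mul, h, mul_zero]

private lemma natDegree_legendre_le (n : ℕ) : (legendre n).natDegree ≤ n := by
  refine (natDegree_smul_le _ _).trans ?_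
  refine (Polynomial.natDegree_iterate_derivative _ _).trans ?_
  have h1 : ((X : ℝ[X]) ^ 2 - 1) = X ^ 2 - C 1 := by simp
  have h2 : (((X : ℝ[X]) ^ 2 - 1) ^ n).natDegree ≤ n * 2 := by
    refine (natDegree_pow_le).trans ?_
    rw [h1, natDegree_X_pow_sub_C]
  omega

/-- Stiffness-in-time coefficients of the Legendre basis (proof of Theorem 3.1):
`∫_{-1}^1 P_k' P_j = 0` if `k ≤ j`, and `= 1 - (-1)^{k+j}` if `k > j`. -/
theorem legendre_derivative_integrals (j k : ℕ) :
    (k ≤ j →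
        ∫ x in (-1 : ℝ)..1, (derivative (legendre k)).eval x * (legendre j).eval x = 0)
    ∧ (j < k →
        ∫ x in (-1 : ℝ)..1, (derivative (legendre k)).eval x * (legendre j).eval x
          = 1 - (-1) ^ (k + j)) := by
  constructor
  · intro hkj
    rcases Nat.eq_zero_or_pos k with hk | hk
    · subst hk
      simp [legendre, derivative_smul]
    · have hdeg : (derivative (legendre k)).natDegree < j := by
        have := Polynomial.natDegree_derivative_le (legendre k)
        have := natDegree_legendre_le k
        omega
      have := legendre_orth (n := j) hdeg
      rw [← this]
      congr 1
      ext x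
      ring
  · intro hjk
    rw [poly_ibp]
    have hdeg : (derivative (legendre j)).natDegree < k := by
      have := Polynomial.natDegree_derivative_le (legendre j)
      have := natDegree_legendre_le j
      omega
    rw [legendre_orth (n := k) hdeg, legendre_eval_one, legendre_eval_one,
        legendre_eval_neg_one, legendre_eval_neg_one, pow_add]
    ring
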